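/- arXiv:1202.0711 — 3 statements merged into one kernel-verified Lean document; each statement's English description precedes it below -/
import Mathlib

section
/- Let R be a commutative ring, n ≥ 1, Λ = M_{n×n}(R), and α ∈ Λ. Then the Fitting invariant of the quotient of Λ by the principal left ideal Λα is the principal R-ideal generated by the determinant of α: Fit_Λ(Λ/Λα) = R·det(α). -/
open Matrix

section FitDefs

variable (R : Type*) [CommRing R]

/-- The ideal of all maximal minors of a rectangular matrix (this is the zero
ideal when there are fewer rows than columns). -/
noncomputable def minorsIdeal {a b : ℕ} (H : Matrix (Fin a) (Fin b) R) : Ideal R :=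
  Ideal.span {x : R | ∃ f : Fin b → Fin a, x = ((H.submatrix f id).det)}

/-- `(H, π)` is a finite presentation `R^a --H--> R^b --π->> M` of the `R`-module `M`,
where `H` acts by right multiplication on row vectors. -/
def IsPresentation {a b : ℕ} (H : Matrix (Fin a) (Fin b) R) (M : Type*)
    [AddCommGroup M] [Module R M] (π : (Fin b → R) →ₗ[R] M) : Prop :=
  Function.Surjective π ∧ LinearMap.ker π = LinearMap.range H.vecMulLinear

/-- The (zeroth) Fitting ideal of an `R`-module, defined as the supremum over all
finite presentations of the ideal of maximal minors; for a finitely presented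
module this agrees with the classical Fitting ideal computed from any single
presentation, since the latter is independent of the chosen presentation. -/
noncomputable def fitIdeal (M : Type*) [AddCommGroup M] [Module R M] : Ideal R :=
  ⨆ (a : ℕ) (b : ℕ) (H : Matrix (Fin a) (Fin b) R) (π : (Fin b → R) →ₗ[R] M)
    (_ : IsPresentation R H M π), minorsIdeal R H

end FitDefs

section MatrixModule

variable (n : ℕ) (R : Type*) [CommRing R] (M : Type*) [AddCommGroup M]
  [Module (Matrix (Fin n) (Fin n) R) M] [Module R M]
  [IsScalarTower R (Matrix (Fin n) (Fin n) R) M]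

/-- Left multiplication by the matrix unit `e_{ii}` as an `R`-linear endomorphism
of a module over the matrix ring. -/
noncomputable def eMul (i : Fin n) : M →ₗ[R] M where
  toFun x := Matrix.single i i (1 : R) • x
  map_add' x y := smul_add _ x y
  map_smul' r x := (smul_comm r (Matrix.single i i (1 : R)) x).symm

/-- The `R`-submodule `e_{ii}M` of a module `M` over the matrix ring. -/
noncomputable def eComponent (i : Fin n) : Submodule R M :=
  LinearMap.range (eMul n R M i)

end MatrixModule


section MatrixModuleAux
variable (n : ℕ) (R : Type*) [CommRing R] (M : Type*) [AddCommGroup M]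
  [Module (Matrix (Fin n) (Fin n) R) M] [Module R M]
  [IsScalarTower R (Matrix (Fin n) (Fin n) R) M]

lemma eMul_apply (i : Fin n) (x : M) :
    eMul n R M i x = Matrix.single i i (1 : R) • x := rfl

end MatrixModuleAux

lemma pi_sum_single {R : Type*} [CommRing R] {b : ℕ} (v : Fin b → R) :
    ∑ i, v i • (Pi.single i (1 : R) : Fin b → R) = v := by
  ext j
  simp [Pi.single_apply]

lemma map_vecMul_single {R : Type*} [CommRing R] {b n : ℕ} {M : Type*} [AddCommGroup M]
    [Module R M] (φ : (Fin n → R) →ₗ[R] M) (Q : Matrix (Fin b) (Fin n) R) (v : Fin b → R) :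
    φ (v ᵥ* Q) = ∑ i, v i • φ (Q i) := by
  have hv : v ᵥ* Q = ∑ i, v i • Q i := by
    ext j
    simp [Matrix.vecMul, dotProduct, Finset.sum_apply]
  rw [hv, map_sum]
  simp_rw [LinearMap.map_smul]

lemma map_vecMul_eq {R : Type*} [CommRing R] {b n : ℕ} {M : Type*} [AddCommGroup M]
    [Module R M] (π : (Fin b → R) →ₗ[R] M) (π₀ : (Fin n → R) →ₗ[R] M)
    (Q : Matrix (Fin b) (Fin n) R) (hQ : ∀ i, π₀ (Q i) = π (Pi.single i 1))
    (v : Fin b → R) : π₀ (v ᵥ* Q) = π v := by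
  rw [map_vecMul_single]
  simp_rw [hQ, ← LinearMap.map_smul, ← map_sum, pi_sum_single]

lemma key_det_mem {R : Type*} [CommRing R] {n b : ℕ} (α : Matrix (Fin n) (Fin n) R)
    {M : Type*} [AddCommGroup M] [Module R M]
    (π : (Fin b → R) →ₗ[R] M) (hπ : Function.Surjective π)
    (π₀ : (Fin n → R) →ₗ[R] M) (hπ₀ : Function.Surjective π₀)
    (hker : LinearMap.ker π₀ ≤ LinearMap.range α.vecMulLinear)
    (B : Matrix (Fin b) (Fin b) R) (hB : ∀ i, π (B i) = 0) :
    B.det ∈ Ideal.span {α.det} := by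
  -- lifts
  choose Q hQ using fun i : Fin b => hπ₀ (π (Pi.single i 1))
  choose P hP using fun j : Fin n => hπ (π₀ (Pi.single j 1))
  set Qm : Matrix (Fin b) (Fin n) R := Matrix.of Q with hQm
  set Pm : Matrix (Fin n) (Fin b) R := Matrix.of P with hPm
  have hQm' : ∀ v : Fin b → R, π₀ (v ᵥ* Qm) = π v :=
    map_vecMul_eq π π₀ Qm (fun i => hQ i)
  have hPm' : ∀ w : Fin n → R, π (w ᵥ* Pm) = π₀ w :=
    map_vecMul_eq π₀ π Pm (fun j => hP j)
  set N : Matrix (Fin b ⊕ Fin n) (Fin b ⊕ Fin n) R := fromBlocks B 0 (-Pm) 1 with hN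
  -- the second-block entries after column operation lie in ker π₀
  set row2 : (Fin b ⊕ Fin n) → (Fin n → R) :=
    fun r => (fun k => N r (Sum.inl k)) ᵥ* Qm + (fun j => N r (Sum.inr j)) with hrow2
  have hrow : ∀ r : Fin b ⊕ Fin n, π₀ (row2 r) = 0 := by
    intro r
    rw [hrow2]
    simp only [map_add, hQm']
    cases r with
    | inl i =>
      have h1 : (fun k => N (Sum.inl i) (Sum.inl k)) = B i := rfl
      have h2 : (fun j => N (Sum.inl i) (Sum.inr j)) = (0 : Fin n → R) := rfl
      rw [h1, h2, hB, map_zero, add_zero]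
    | inr i =>
      have h1 : (fun k => N (Sum.inr i) (Sum.inl k)) = -(Pm i) := rfl
      have h2 : (fun j => N (Sum.inr i) (Sum.inr j)) = Pi.single i 1 := by
        ext j; simp [hN, Matrix.one_apply, Pi.single_apply, eq_comm]
      rw [h1, h2, map_neg, show π (Pm i) = π₀ (Pi.single i 1) from hP i, neg_add_cancel]
  -- choose the W matrix
  have hmem : ∀ r, row2 r ∈ LinearMap.range α.vecMulLinear :=
    fun r => hker (by simpa using hrow r)
  choose w hw using hmem
  set U : Matrix (Fin b ⊕ Fin n) (Fin b) R := Matrix.of (fun r k => N r (Sum.inl k)) with hU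
  set W : Matrix (Fin b ⊕ Fin n) (Fin n) R := Matrix.of w with hW
  have key : N * fromBlocks (1 : Matrix (Fin b) (Fin b) R) Qm 0 1
      = fromCols U W * fromBlocks (1 : Matrix (Fin b) (Fin b) R) 0 0 α := by
    rw [← fromCols_toCols N, fromCols_mul_fromBlocks, fromCols_mul_fromBlocks]
    simp only [Matrix.mul_one, Matrix.mul_zero, Matrix.zero_mul, add_zero, zero_add]
    have hc1 : N.toCols₁ = U := rfl
    rw [hc1]
    ext r c
    cases c with
    | inl k => simp [fromCols_apply_inl]
    | inr j =>
      simp only [fromCols_apply_inr]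
      have h2 := congrFun (hw r) j
      simp only [Matrix.vecMulLinear_apply, hrow2, Pi.add_apply] at h2
      rw [show (w r ᵥ* α) j = ∑ k, w r k * α k j from rfl] at h2
      simp only [Matrix.add_apply, Matrix.mul_apply, toCols₁_apply, toCols₂_apply,
        Matrix.of_apply, hW]
      rw [h2]
      simp [Matrix.vecMul, dotProduct, hU]
  have hdet : B.det = (fromCols U W).det * α.det := by
    have h1 := congrArg Matrix.det key
    rw [det_mul, det_mul, det_fromBlocks_zero₂₁, det_fromBlocks_zero₂₁,
      det_fromBlocks_zero₁₂] at h1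
    simpa [hN, det_fromBlocks_zero₁₂] using h1
  rw [hdet]
  exact Ideal.mul_mem_left _ _ (Ideal.subset_span rfl)

section StdPres

variable (n : ℕ) (hn : 0 < n) (R : Type*) [CommRing R]

/-- Embedding of `R^n` as the first-row matrices. -/
noncomputable def rowEmb : (Fin n → R) →ₗ[R] Matrix (Fin n) (Fin n) R where
  toFun v := Matrix.of fun i j => if i = (⟨0, hn⟩ : Fin n) then v j else 0
  map_add' u v := by ext i j; by_cases h : i = (⟨0, hn⟩ : Fin n) <;> simp [h]
  map_smul' r v := by ext i j; by_cases h : i = (⟨0, hn⟩ : Fin n) <;> simp [h]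

lemma rowEmb_row (v : Fin n → R) : rowEmb n hn R v ⟨0, hn⟩ = v := by
  ext j; simp [rowEmb]

lemma stdBasis_mul (β : Matrix (Fin n) (Fin n) R) :
    Matrix.single (⟨0, hn⟩ : Fin n) (⟨0, hn⟩ : Fin n) (1 : R) * β
      = rowEmb n hn R (β ⟨0, hn⟩) := by
  ext i j
  simp only [rowEmb, Matrix.mul_apply, Matrix.single, Matrix.of_apply,
    LinearMap.coe_mk, AddHom.coe_mk]
  rw [Finset.sum_eq_single (⟨0, hn⟩ : Fin n)]
  · by_cases h : i = (⟨0, hn⟩ : Fin n) <;> simp [h, eq_comm]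
  · intro k _ hk
    simp [Ne.symm hk]
  · simp

lemma rowEmb_mul (v : Fin n → R) (β : Matrix (Fin n) (Fin n) R) :
    rowEmb n hn R v * β = rowEmb n hn R (v ᵥ* β) := by
  ext i j
  by_cases h : i = (⟨0, hn⟩ : Fin n) <;>
    simp [rowEmb, Matrix.mul_apply, Matrix.vecMul, dotProduct, h]

variable (α : Matrix (Fin n) (Fin n) R)

lemma stdPres_mem (v : Fin n → R) :
    ((Ideal.span {α} : Ideal (Matrix (Fin n) (Fin n) R)).mkQ.restrictScalars R) (rowEmb n hn R v) ∈ eComponent n R (Matrix (Fin n) (Fin n) R ⧸ (Ideal.span {α} : Ideal (Matrix (Fin n) (Fin n) R))) ⟨0, hn⟩ := by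
  refine ⟨((Ideal.span {α} : Ideal (Matrix (Fin n) (Fin n) R)).mkQ.restrictScalars R) (rowEmb n hn R v), ?_⟩
  rw [eMul_apply]
  simp only [LinearMap.restrictScalars_apply, Submodule.mkQ_apply]
  rw [← Submodule.Quotient.mk_smul, smul_eq_mul, stdBasis_mul, rowEmb_row]

/-- standard presentation map -/
noncomputable def stdPres : (Fin n → R) →ₗ[R] ↥(eComponent n R (Matrix (Fin n) (Fin n) R ⧸ (Ideal.span {α} : Ideal (Matrix (Fin n) (Fin n) R))) ⟨0, hn⟩) :=
  LinearMap.codRestrict _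
    (((Ideal.span {α} : Ideal (Matrix (Fin n) (Fin n) R)).mkQ.restrictScalars R) ∘ₗ rowEmb n hn R)
    (fun v => stdPres_mem n hn R α v)

lemma stdPres_surjective : Function.Surjective (stdPres n hn R α) := by
  rintro ⟨x, y, rfl⟩
  obtain ⟨β, rfl⟩ := (Ideal.span {α} : Ideal (Matrix (Fin n) (Fin n) R)).mkQ_surjective y
  refine ⟨β ⟨0, hn⟩, ?_⟩
  apply Subtype.ext
  simp only [stdPres, LinearMap.codRestrict_apply, LinearMap.coe_comp, Function.comp_apply,
    LinearMap.restrictScalars_apply, Submodule.mkQ_apply, eMul_apply]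
  rw [← Submodule.Quotient.mk_smul, smul_eq_mul, stdBasis_mul]

lemma stdPres_ker : LinearMap.ker (stdPres n hn R α) = LinearMap.range α.vecMulLinear := by
  rw [stdPres, LinearMap.ker_codRestrict]
  ext v
  simp only [LinearMap.mem_ker, LinearMap.coe_comp, Function.comp_apply,
    LinearMap.restrictScalars_apply, Submodule.mkQ_apply, Submodule.Quotient.mk_eq_zero,
    LinearMap.mem_range, Matrix.vecMulLinear_apply]
  rw [Ideal.mem_span_singleton']
  constructor
  · rintro ⟨β, hβ⟩
    refine ⟨β ⟨0, hn⟩, ?_⟩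
    have h0 : (β * α) ⟨0, hn⟩ = β ⟨0, hn⟩ ᵥ* α := by
      ext j; simp [Matrix.mul_apply, Matrix.vecMul, dotProduct]
    funext j
    have hj := congrFun (congrFun hβ (⟨0, hn⟩ : Fin n)) j
    rw [show (β * α) ⟨0, hn⟩ j = (β ⟨0, hn⟩ ᵥ* α) j from congrFun h0 j] at hj
    rwa [rowEmb_row] at hj
  · rintro ⟨w, rfl⟩
    exact ⟨rowEmb n hn R w, by rw [rowEmb_mul]⟩

end StdPres

/-- For `α ∈ Λ = M_{n×n}(R)`, the Fitting invariant of the quotient of `Λ` by the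
principal left ideal `Λα` is the principal `R`-ideal generated by `det(α)`:
`Fit_Λ(Λ/Λα) = R·det(α)`. -/
theorem fitIdeal_quotient_principal (n : ℕ) (hn : 0 < n) (R : Type*) [CommRing R]
    (α : Matrix (Fin n) (Fin n) R) :
    fitIdeal R (eComponent n R
        (Matrix (Fin n) (Fin n) R ⧸ (Ideal.span {α} : Ideal (Matrix (Fin n) (Fin n) R)))
        ⟨0, hn⟩) =
      Ideal.span {α.det} := by
  apply le_antisymm
  · refine iSup_le fun a => iSup_le fun b => iSup_le fun H => iSup_le fun π =>
      iSup_le fun hpres => ?_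
    rw [minorsIdeal, Ideal.span_le]
    rintro x ⟨f, rfl⟩
    refine key_det_mem α π hpres.1 (stdPres n hn R α) (stdPres_surjective n hn R α)
      (le_of_eq (stdPres_ker n hn R α)) (H.submatrix f id) (fun i => ?_)
    have hmem : H.submatrix f id i ∈ LinearMap.range H.vecMulLinear := by
      refine ⟨Pi.single (f i) 1, ?_⟩
      ext j
      simp [Matrix.vecMul, dotProduct, Pi.single_apply]
    rw [← hpres.2] at hmem
    exact hmem
  · rw [Ideal.span_le, Set.singleton_subset_iff]
    have h1 : α.det ∈ minorsIdeal R α :=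
      Ideal.subset_span ⟨id, by rw [Matrix.submatrix_id_id]⟩
    have h2 : minorsIdeal R α ≤ fitIdeal R (eComponent n R
        (Matrix (Fin n) (Fin n) R ⧸ (Ideal.span {α} : Ideal (Matrix (Fin n) (Fin n) R)))
        ⟨0, hn⟩) := by
      refine le_iSup_of_le n (le_iSup_of_le n (le_iSup_of_le α
        (le_iSup_of_le (stdPres n hn R α) ?_)))
      exact le_iSup_of_le ⟨stdPres_surjective n hn R α, stdPres_ker n hn R α⟩ le_rfl
    exact h2 h1
end

section
/- Let G be a finite group with commutator subgroup G', and let p be a prime. Then p does not divide |G'| if and only if G has an abelian Sylow p-subgroup P and a normal p-complement N (a normal subgroup N of G with p ∤ |N| and [G : N] a power of p); in this case G is the internal semidirect product N ⋊ P. -/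
/-- Let `G` be a finite group with commutator subgroup `G'` and let `p` be a prime.
Then `p ∤ |G'|` if and only if `G` has an abelian Sylow `p`-subgroup `P` and a normal
`p`-complement `N` (a normal subgroup of order prime to `p` and of index a power of `p`);
in this case `G` is the internal semidirect product `N ⋊ P`, i.e. `N` and `P` are
complementary subgroups. -/
theorem not_dvd_card_commutator_iff (G : Type*) [Group G] [Finite G] (p : ℕ)
    [Fact p.Prime] :
    (¬ p ∣ Nat.card ↥(commutator G)) ↔
      ∃ (P : Sylow p G) (N : Subgroup G), N.Normal ∧
        (¬ p ∣ Nat.card ↥N) ∧ (∃ k : ℕ, N.index = p ^ k) ∧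
        (∀ a b : G, a ∈ P → b ∈ P → a * b = b * a) ∧
        N.IsComplement' (P : Subgroup G) := by
  constructor
  · intro hc
    obtain ⟨P⟩ : Nonempty (Sylow p G) := inferInstance
    -- every element lying in both P and the commutator subgroup is trivial
    have key : ∀ g : G, g ∈ (P : Subgroup G) → g ∈ commutator G → g = 1 := by
      intro g hgP hgC
      obtain ⟨k, hk⟩ := P.2 ⟨g, hgP⟩
      have hk' : g ^ p ^ k = 1 := by
        have := congrArg (Subtype.val) hk
        push_cast at this
        exact this
      have h1 : orderOf g ∣ p ^ k := orderOf_dvd_of_pow_eq_one hk'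
      have h2 : orderOf g ∣ Nat.card ↥(commutator G) := by
        have : orderOf (⟨g, hgC⟩ : commutator G) = orderOf g :=
          Subgroup.orderOf_mk g hgC
        exact this ▸ orderOf_dvd_natCard _
      have hcop : Nat.Coprime (p ^ k) (Nat.card ↥(commutator G)) :=
        (Nat.Prime.coprime_iff_not_dvd (Fact.out)).mpr hc |>.pow_left k
      have : orderOf g = 1 := Nat.eq_one_of_dvd_coprimes hcop h1 h2
      rwa [orderOf_eq_one_iff] at this
    have hab : ∀ a b : G, a ∈ P → b ∈ P → a * b = b * a := by
      intro a b ha hb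
      open scoped commutatorElement in
      have hmem : ⁅a, b⁆ ∈ (P : Subgroup G) := by
        rw [commutatorElement_def]
        exact Subgroup.mul_mem _ (Subgroup.mul_mem _ (Subgroup.mul_mem _ ha hb)
          (Subgroup.inv_mem _ ha)) (Subgroup.inv_mem _ hb)
      open scoped commutatorElement in
      have hmem' : ⁅a, b⁆ ∈ commutator G :=
        Subgroup.commutator_mem_commutator (Subgroup.mem_top a) (Subgroup.mem_top b)
      have := key _ hmem hmem'
      rwa [commutatorElement_eq_one_iff_mul_comm] at this
    have hP : Subgroup.normalizer (P : Set G) ≤ Subgroup.centralizer (P : Set G) := by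
      intro g hg
      rw [Subgroup.mem_centralizer_iff]
      intro x hx
      have hconj : g * x * g⁻¹ ∈ (P : Subgroup G) :=
        (Subgroup.mem_normalizer_iff.mp hg x).mp hx
      open scoped commutatorElement in
      have hmem : ⁅g, x⁆ ∈ (P : Subgroup G) := by
        rw [commutatorElement_def]
        exact Subgroup.mul_mem _ hconj (Subgroup.inv_mem _ hx)
      open scoped commutatorElement in
      have hmem' : ⁅g, x⁆ ∈ commutator G :=
        Subgroup.commutator_mem_commutator (Subgroup.mem_top g) (Subgroup.mem_top x)
      have h1 := key _ hmem hmem'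
      rw [commutatorElement_eq_one_iff_mul_comm] at h1
      exact h1.symm
    refine ⟨P, (MonoidHom.transferSylow P hP).ker, inferInstance,
      MonoidHom.not_dvd_card_ker_transferSylow P hP, ?_, hab,
      MonoidHom.ker_transferSylow_isComplement' P hP⟩
    have := (MonoidHom.ker_transferSylow_isComplement' P hP).symm.index_eq_card
    rw [this]
    exact IsPGroup.iff_card.mp P.2
  · rintro ⟨P, N, hN, hNcard, hk, hab, hcompl⟩
    have hle : commutator G ≤ N := by
      rw [commutator_def, Subgroup.commutator_le]
      intro g₁ _ g₂ _
      obtain ⟨⟨⟨n₁, hn₁⟩, p₁⟩, h₁, -⟩ := hcompl.existsUnique g₁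
      obtain ⟨⟨⟨n₂, hn₂⟩, p₂⟩, h₂, -⟩ := hcompl.existsUnique g₂
      rw [← QuotientGroup.eq_one_iff]
      have e₁ : (QuotientGroup.mk g₁ : G ⧸ N) = QuotientGroup.mk (p₁ : G) := by
        rw [← h₁]
        simp only [QuotientGroup.mk_mul]
        rw [(QuotientGroup.eq_one_iff n₁).mpr hn₁, one_mul]
      have e₂ : (QuotientGroup.mk g₂ : G ⧸ N) = QuotientGroup.mk (p₂ : G) := by
        rw [← h₂]
        simp only [QuotientGroup.mk_mul]
        rw [(QuotientGroup.eq_one_iff n₂).mpr hn₂, one_mul]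
      have hcomm : (p₁ : G) * p₂ = (p₂ : G) * p₁ := hab _ _ p₁.2 p₂.2
      simp only [commutatorElement_def, QuotientGroup.mk_mul, QuotientGroup.mk_inv, e₁, e₂]
      rw [← QuotientGroup.mk_mul, hcomm, QuotientGroup.mk_mul]
      group
    have hdvd : Nat.card ↥(commutator G) ∣ Nat.card ↥N := Subgroup.card_dvd_of_le hle
    exact fun h => hNcard (dvd_trans h hdvd)
end

section
/- Let Γ be a ring and Λ a subring of Γ, and let ζ(Λ), ζ(Γ) denote their centres. Let r ≥ 1, let N be a Λ-submodule of the left Λ-module Λ^r (viewed inside Γ^r), and let Ñ be the Γ-submodule of Γ^r generated by N. Suppose w ∈ ζ(Γ) satisfies w·Γ ⊆ Λ (i.e. w lies in the central conductor F(Γ,Λ) = {x ∈ ζ(Γ) : xΓ ⊆ Λ}) and y ∈ ζ(Γ) satisfies y·Γ^r ⊆ Ñ. Then wy ∈ ζ(Λ) and (wy)·Λ^r ⊆ N. Consequently, for any finitely generated (left) Λ-module M ≅ Λ^r/N, one has F(Γ,Λ) · Ann_{ζ(Γ)}(Γ ⊗_Λ M) ⊆ Ann_{ζ(Λ)}(M).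 -/
/-- Let `Λ ⊆ Γ` be rings, `r ≥ 1`, and let `N` be a `Λ`-submodule of `Λ^r ⊆ Γ^r`
(an additive subgroup of `Γ^r` contained in `Λ^r` and stable under left multiplication
by elements of `Λ`).  Let `Ñ` be the `Γ`-submodule of `Γ^r` generated by `N`.
If `w ∈ ζ(Γ)` lies in the central conductor (i.e. `w·Γ ⊆ Λ`) and `y ∈ ζ(Γ)` satisfies
`y·Γ^r ⊆ Ñ`, then `wy ∈ ζ(Λ)` (it lies in `Λ` and is central there) and
`(wy)·Λ^r ⊆ N`.  (Consequently, for a finitely generated `Λ`-module `M ≅ Λ^r/N`, one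
has `F(Γ,Λ) · Ann_{ζ(Γ)}(Γ ⊗_Λ M) ⊆ Ann_{ζ(Λ)}(M)`, since
`Ann_{ζ(Γ)}(Γ ⊗_Λ M) = {y ∈ ζ(Γ) : y·Γ^r ⊆ Ñ}` and `Ann_{ζ(Λ)}(Λ^r/N) ⊇ {z : z·Λ^r ⊆ N}`.) -/
theorem central_conductor_annihilator (Γ : Type*) [Ring Γ] (Λ : Subring Γ)
    (r : ℕ) (hr : 1 ≤ r) (N : AddSubgroup (Fin r → Γ))
    (hNsub : ∀ v ∈ N, ∀ k : Fin r, v k ∈ Λ)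
    (hNsmul : ∀ a ∈ Λ, ∀ v ∈ N, a • v ∈ N)
    (w : Γ) (hw : w ∈ Subring.center Γ) (hwΛ : ∀ g : Γ, w * g ∈ Λ)
    (y : Γ) (hy : y ∈ Subring.center Γ)
    (hyN : ∀ v : Fin r → Γ, y • v ∈ Submodule.span Γ (N : Set (Fin r → Γ))) :
    (w * y ∈ Λ ∧ ∀ a ∈ Λ, a * (w * y) = (w * y) * a) ∧
      ∀ v : Fin r → Γ, (∀ k : Fin r, v k ∈ Λ) → (w * y) • v ∈ N := by
  have hwc := Subring.mem_center_iff.mp hw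
  have hyc := Subring.mem_center_iff.mp hy
  have key : ∀ x ∈ Submodule.span Γ (N : Set (Fin r → Γ)), ∀ g : Γ, (w * g) • x ∈ N := by
    intro x hx
    induction hx using Submodule.span_induction with
    | mem n hn => intro g; exact hNsmul _ (hwΛ g) n hn
    | zero => intro g; rw [smul_zero]; exact N.zero_mem
    | add x y _ _ ihx ihy =>
      intro g
      rw [smul_add]
      exact N.add_mem (ihx g) (ihy g)
    | smul c x _ ih =>
      intro g
      rw [smul_smul, mul_assoc]
      exact ih (g * c)
  constructor
  · refine ⟨hwΛ y, fun a _ => ?_⟩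
    rw [← mul_assoc, hwc a, mul_assoc, hyc a, mul_assoc]
  · intro v _
    have := key _ (hyN v) 1
    rw [mul_one, smul_smul] at this
    exact this
end
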